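/- Let X be a real-valued random variable and f a function such that P(X ≥ x) ≤ exp(-m·f(x)) for all x, where m ≥ 1. Then E[exp((m-1)·f(X))] ≤ m. -/

import Mathlib

open MeasureTheory Real Set

/-- Key tail lemma: the tail bound on `X` transfers to a tail bound on `f ∘ X`. -/
lemma tail_fX {Ω : Type*} [MeasurableSpace Ω] (μ : Measure Ω) [IsProbabilityMeasure μ]
    (X : Ω → ℝ) (f : ℝ → ℝ) (m : ℝ) (hm : 1 ≤ m)
    (htail : ∀ x : ℝ, μ {ω | x ≤ X ω} ≤ ENNReal.ofReal (Real.exp (-(m * f x))))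
    (s : ℝ) : μ {ω | s ≤ f (X ω)} ≤ ENNReal.ofReal (Real.exp (-(m * s))) := by
  set B := ENNReal.ofReal (Real.exp (-(m * s))) with hB
  have key : ∀ x : ℝ, s ≤ f x → μ {ω | x ≤ X ω} ≤ B := by
    intro x hx
    refine (htail x).trans (ENNReal.ofReal_le_ofReal (exp_le_exp.2 ?_))
    nlinarith
  set S : Set ℝ := {x | s ≤ f x} with hS
  by_cases hSne : S.Nonempty
  · by_cases hbdd : BddBelow S
    · set a := sInf S with ha
      by_cases haS : a ∈ S
      · have hsub : {ω | s ≤ f (X ω)} ⊆ {ω | a ≤ X ω} := fun ω hω => csInf_le hbdd hω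
        exact (measure_mono hsub).trans (key a haS)
      · have hsub : {ω | s ≤ f (X ω)} ⊆ ⋃ n : ℕ, {ω | a + 1 / (n + 1) ≤ X ω} := by
          intro ω hω
          have hmem : X ω ∈ S := hω
          have hle : a ≤ X ω := csInf_le hbdd hmem
          have hlt : a < X ω := lt_of_le_of_ne hle fun h => haS (by rw [show a = X ω from h]; exact hmem)
          obtain ⟨n, hn⟩ := exists_nat_one_div_lt (sub_pos.2 hlt)
          exact mem_iUnion.2 ⟨n, by simp only [mem_setOf_eq]; push_cast; linarith⟩
        refine (measure_mono hsub).trans ?_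
        have hmono : Monotone fun n : ℕ => {ω | a + 1 / ((n : ℝ) + 1) ≤ X ω} := by
          intro i j hij ω hω
          simp only [mem_setOf_eq] at *
          have h1 : (1 : ℝ) / ((j : ℝ) + 1) ≤ 1 / ((i : ℝ) + 1) := by
            apply one_div_le_one_div_of_le (by positivity)
            exact_mod_cast by omega
          linarith
        rw [hmono.measure_iUnion]
        refine iSup_le fun n => ?_
        have hlt : sInf S < a + 1 / ((n : ℝ) + 1) := by
          rw [← ha]; have : (0:ℝ) < 1 / ((n : ℝ) + 1) := by positivity
          linarith
        obtain ⟨x, hxS, hx⟩ := exists_lt_of_csInf_lt hSne hlt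
        refine le_trans (measure_mono fun ω hω => ?_) (key x hxS)
        simp only [mem_setOf_eq] at *; linarith
    · have hsub : {ω | s ≤ f (X ω)} ⊆ ⋃ n : ℕ, {ω | -(n : ℝ) ≤ X ω} := by
        intro ω _
        obtain ⟨n, hn⟩ := exists_nat_ge (-(X ω))
        exact mem_iUnion.2 ⟨n, by simp only [mem_setOf_eq]; linarith⟩
      refine (measure_mono hsub).trans ?_
      have hmono : Monotone fun n : ℕ => {ω | -(n : ℝ) ≤ X ω} := by
        intro i j hij ω hω
        simp only [mem_setOf_eq] at *
        have : (i : ℝ) ≤ (j : ℝ) := by exact_mod_cast hij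
        linarith
      rw [hmono.measure_iUnion]
      refine iSup_le fun n => ?_
      obtain ⟨x, hxS, hx⟩ := not_bddBelow_iff.1 hbdd (-(n : ℝ))
      refine le_trans (measure_mono fun ω hω => ?_) (key x hxS)
      simp only [mem_setOf_eq] at *; linarith
  · have hempty : {ω | s ≤ f (X ω)} = ∅ := by
      ext ω; simp only [mem_setOf_eq, mem_empty_iff_false, iff_false]
      exact fun h => hSne ⟨X ω, h⟩
    rw [hempty]; simp

/-- McAllester's lemma: if `P(X ≥ x) ≤ exp (-m * f x)` for all `x` with `m ≥ 1`,
then `E[exp ((m-1) * f X)] ≤ m`. -/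
theorem stmt_0 {Ω : Type*} [MeasurableSpace Ω] (μ : Measure Ω) [IsProbabilityMeasure μ]
    (X : Ω → ℝ) (hX : Measurable X) (f : ℝ → ℝ) (hf : Measurable f)
    (m : ℝ) (hm : 1 ≤ m)
    (htail : ∀ x : ℝ, μ {ω | x ≤ X ω} ≤ ENNReal.ofReal (Real.exp (-(m * f x)))) :
    ∫ ω, Real.exp ((m - 1) * f (X ω)) ∂μ ≤ m := by
  rcases eq_or_lt_of_le hm with h1 | h1
  · simp [← h1]
  -- now 1 < m
  have hm1 : (0:ℝ) < m - 1 := by linarith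
  set p : ℝ := m / (m - 1) with hp
  have hp1 : 1 < p := by rw [hp]; rw [lt_div_iff₀ hm1]; linarith
  have hgmeas : Measurable fun ω => Real.exp ((m - 1) * f (X ω)) :=
    (measurable_exp.comp ((measurable_const.mul (hf.comp hX))))
  have hnn : 0 ≤ᵐ[μ] fun ω => Real.exp ((m - 1) * f (X ω)) :=
    Filter.Eventually.of_forall fun ω => (exp_pos _).le
  have lint : ∫⁻ ω, ENNReal.ofReal (Real.exp ((m - 1) * f (X ω))) ∂μ ≤ ENNReal.ofReal m := by
    rw [lintegral_eq_lintegral_meas_le μ hnn hgmeas.aemeasurable]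
    have hsplit : (Ioi (0:ℝ)) = Ioc (0:ℝ) 1 ∪ Ioi 1 := (Ioc_union_Ioi_eq_Ioi zero_le_one).symm
    rw [hsplit, lintegral_union measurableSet_Ioi (Ioc_disjoint_Ioi le_rfl)]
    have h1' : ∫⁻ t in Ioc (0:ℝ) 1, μ {ω | t ≤ Real.exp ((m - 1) * f (X ω))} ≤ 1 := by
      calc ∫⁻ t in Ioc (0:ℝ) 1, μ {ω | t ≤ Real.exp ((m - 1) * f (X ω))}
          ≤ ∫⁻ _ in Ioc (0:ℝ) 1, 1 := lintegral_mono fun t => prob_le_one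
        _ = 1 := by simp
    have h2' : ∫⁻ t in Ioi (1:ℝ), μ {ω | t ≤ Real.exp ((m - 1) * f (X ω))}
        ≤ ENNReal.ofReal (m - 1) := by
      have hbound : ∀ t ∈ Ioi (1:ℝ),
          μ {ω | t ≤ Real.exp ((m - 1) * f (X ω))} ≤ ENNReal.ofReal (t ^ (-p)) := by
        intro t ht
        have ht1 : (1:ℝ) < t := ht
        have ht0 : (0:ℝ) < t := lt_trans zero_lt_one ht1
        have hset : {ω | t ≤ Real.exp ((m - 1) * f (X ω))}
            = {ω | Real.log t / (m - 1) ≤ f (X ω)} := by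
          ext ω
          simp only [mem_setOf_eq]
          rw [← Real.log_le_iff_le_exp (by positivity), div_le_iff₀ hm1]
          constructor <;> intro h <;> linarith [mul_comm (f (X ω)) (m - 1)]
        rw [hset]
        refine (tail_fX μ X f m hm htail _).trans (le_of_eq ?_)
        congr 1
        rw [Real.rpow_def_of_pos ht0]
        congr 1
        rw [hp]
        field_simp
      calc ∫⁻ t in Ioi (1:ℝ), μ {ω | t ≤ Real.exp ((m - 1) * f (X ω))}
          ≤ ∫⁻ t in Ioi (1:ℝ), ENNReal.ofReal (t ^ (-p)) :=
            setLIntegral_mono' measurableSet_Ioi hbound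
        _ = ENNReal.ofReal (∫ t in Ioi (1:ℝ), t ^ (-p)) := by
            rw [ofReal_integral_eq_lintegral_ofReal]
            · exact integrableOn_Ioi_rpow_of_lt (by linarith) zero_lt_one
            · refine (ae_restrict_iff' measurableSet_Ioi).2 (Filter.Eventually.of_forall ?_)
              intro t ht
              exact Real.rpow_nonneg (le_of_lt (lt_trans zero_lt_one ht)) _
        _ = ENNReal.ofReal (m - 1) := by
            rw [integral_Ioi_rpow_of_lt (by linarith) zero_lt_one]
            congr 1
            rw [Real.one_rpow]
            have hne : -p + 1 ≠ 0 := by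
              intro h
              have : p = 1 := by linarith
              linarith
            rw [div_eq_iff hne, hp]
            field_simp
            ring
    calc _ ≤ 1 + ENNReal.ofReal (m - 1) := add_le_add h1' h2'
      _ = ENNReal.ofReal m := by
          rw [← ENNReal.ofReal_one, ← ENNReal.ofReal_add zero_le_one (by linarith)]
          norm_num
  rw [integral_eq_lintegral_of_nonneg_ae hnn hgmeas.aestronglyMeasurable]
  exact ENNReal.toReal_le_of_le_ofReal (by linarith) lint
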